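/- Let G be a word-representable (i.e., 0-11-representable) simple graph and let e = xy be an edge of G. Then the graph G \ e, obtained from G by deleting the edge e (keeping all vertices), is 1-11-representable. -/

import Mathlib

/-- Number of occurrences of the consecutive pattern 11 in a word,
i.e. the number of positions `i` with `u i = u (i+1)`. -/
def pattern11Count {V : Type*} [DecidableEq V] (u : List V) : ℕ :=
  (u.zip u.tail).countP (fun p => decide (p.1 = p.2))

/-- `w` is a `k`-11-representant of the simple graph `G`: every vertex occurs in `w`,
and two distinct vertices are adjacent iff the subword of `w` induced by them contains
at most `k` occurrences of the consecutive pattern 11. -/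
def IsK11Rep {V : Type*} [DecidableEq V] (G : SimpleGraph V) (k : ℕ) (w : List V) : Prop :=
  (∀ v : V, v ∈ w) ∧
  ∀ x y : V, x ≠ y →
    (G.Adj x y ↔ pattern11Count (w.filter (fun a => decide (a = x ∨ a = y))) ≤ k)

/-- A simple graph is `k`-11-representable if it has a `k`-11-representant. -/
def K11Representable {V : Type*} [DecidableEq V] (G : SimpleGraph V) (k : ℕ) : Prop :=
  ∃ w : List V, IsK11Rep G k w

/-- A graph is `t`-uniformly `k`-11-representable if it has a `k`-11-representant in which
every vertex occurs exactly `t` times. -/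
def UniformK11Rep {V : Type*} [DecidableEq V] (G : SimpleGraph V) (t k : ℕ) : Prop :=
  ∃ w : List V, IsK11Rep G k w ∧ ∀ v : V, w.count v = t

/-- The final permutation `σ(w)`: distinct letters of `w` in order of last occurrence. -/
def finalPerm {V : Type*} [DecidableEq V] (w : List V) : List V := w.dedup

/-- The initial permutation `π(w)`: distinct letters of `w` in order of first occurrence. -/
def initPerm {V : Type*} [DecidableEq V] (w : List V) : List V := (w.reverse.dedup).reverse

namespace K11Aux

variable {V : Type*} [DecidableEq V]

/-- junction count -/
def junc : Option V → Option V → ℕ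
  | some c, some d => if c = d then 1 else 0
  | _, _ => 0

lemma junc_def (c d : V) : junc (some c) (some d) = if c = d then 1 else 0 := rfl
lemma junc_none_left (o : Option V) : junc (none : Option V) o = 0 := by
  cases o <;> rfl

@[simp] lemma pc_nil : pattern11Count ([] : List V) = 0 := rfl
@[simp] lemma pc_single (a : V) : pattern11Count [a] = 0 := rfl

lemma pc_cons_cons (a b : V) (l : List V) :
    pattern11Count (a :: b :: l) = (if a = b then 1 else 0) + pattern11Count (b :: l) := by
  simp [pattern11Count, List.countP_cons]
  by_cases h : a = b <;> simp [h] <;> omega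

lemma pc_append (u v : List V) :
    pattern11Count (u ++ v) = pattern11Count u + pattern11Count v + junc u.getLast? v.head? := by
  induction u with
  | nil => simp [pc_nil, junc]
  | cons a u ih =>
    cases u with
    | nil =>
      cases v with
      | nil => simp [pc_single, junc]
      | cons h t => simp [pc_cons_cons, pc_single, junc]; omega
    | cons b u' =>
      have h1 : (a :: b :: u') ++ v = a :: b :: (u' ++ v) := rfl
      rw [h1, pc_cons_cons, pc_cons_cons]
      have : (b :: u') ++ v = b :: (u' ++ v) := rfl
      rw [← this, ih, List.getLast?_cons_cons]
      ring

lemma pc_cons_ge (a : V) (l : List V) : pattern11Count l ≤ pattern11Count (a :: l) := by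
  cases l with
  | nil => simp
  | cons b t => rw [pc_cons_cons]; omega

lemma pc_append_ge (u v : List V) :
    pattern11Count u + pattern11Count v ≤ pattern11Count (u ++ v) := by
  rw [pc_append]; omega

lemma pc_append_ge_right (u v : List V) :
    pattern11Count v ≤ pattern11Count (u ++ v) := by
  have := pc_append_ge u v; omega


def altL : V → V → ℕ → List V
  | _, _, 0 => []
  | a, b, n+1 => a :: altL b a n
@[simp] lemma altL_zero (a b : V) : altL a b 0 = [] := rfl
lemma altL_succ (a b : V) (n : ℕ) : altL a b (n+1) = a :: altL b a n := rfl
lemma altL_succ_succ (a b : V) (n : ℕ) : altL a b (n+2) = a :: b :: altL a b n := rfl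

lemma mem_altL {a b c : V} {n : ℕ} (h : c ∈ altL a b n) : c = a ∨ c = b := by
  induction n generalizing a b with
  | zero => simp [altL] at h
  | succ m ih =>
    rw [altL_succ] at h
    rcases List.mem_cons.mp h with h | h
    · exact Or.inl h
    · exact (ih h).symm

lemma length_altL (a b : V) (n : ℕ) : (altL a b n).length = n := by
  induction n generalizing a b with
  | zero => rfl
  | succ m ih => simp [altL_succ, ih]

lemma pc_altL {a b : V} (hab : a ≠ b) (n : ℕ) : pattern11Count (altL a b n) = 0 := by
  induction n generalizing a b with
  | zero => simp
  | succ m ih =>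
    cases m with
    | zero => simp [altL]
    | succ k =>
      rw [altL_succ_succ, pc_cons_cons, if_neg hab, ← altL_succ, ih hab.symm]

lemma head?_altL (a b : V) (n : ℕ) (hn : 1 ≤ n) : (altL a b n).head? = some a := by
  cases n with
  | zero => omega
  | succ m => rfl


-- structure lemma
lemma struct {a b : V} (hab : a ≠ b) (v : List V)
    (hmem : ∀ c ∈ v, c = a ∨ c = b) (h0 : pattern11Count v = 0) :
    v = altL a b v.length ∨ v = altL b a v.length := by
  induction v with
  | nil => exact Or.inl rfl
  | cons c v' ih =>
    cases v' with
    | nil =>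
      rcases hmem c (by simp) with h | h
      · left; rw [h]; rfl
      · right; rw [h]; rfl
    | cons d l =>
      rw [pc_cons_cons] at h0
      have hcd : c ≠ d := by by_contra h; simp [h] at h0
      have h0' : pattern11Count (d :: l) = 0 := by
        by_cases h : c = d <;> simp [h] at h0 <;> omega
      have hmem' : ∀ e ∈ d :: l, e = a ∨ e = b := fun e he => hmem e (List.mem_cons_of_mem _ he)
      rcases ih hmem' h0' with h | h
      · -- d :: l = altL a b (len), so d = a, hence c = b
        have hd : d = a := by
          have h' := congrArg List.head? h
          rw [List.length_cons, altL_succ] at h'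
          simpa using h'
        have hc : c = b := by
          rcases hmem c (by simp) with h' | h'
          · exact absurd (h'.trans hd.symm) hcd
          · exact h'
        right
        rw [List.length_cons, altL_succ, hc, ← h]
      · have hd : d = b := by
          have h' := congrArg List.head? h
          rw [List.length_cons, altL_succ] at h'
          simpa using h'
        have hc : c = a := by
          rcases hmem c (by simp) with h' | h'
          · exact h'
          · exact absurd (h'.trans hd.symm) hcd
        left
        rw [List.length_cons, altL_succ, hc, ← h]

lemma getLast?_altL_two_mul_add_two (a b : V) (n : ℕ) :
    (altL a b (2*n+2)).getLast? = some b := by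
  induction n with
  | zero => rfl
  | succ k ih =>
    rw [show 2*(k+1)+2 = (2*k+2)+2 by ring, altL_succ_succ,
        List.getLast?_cons_cons, show (2*k+2) = (2*k+1)+1 by ring, altL_succ,
        List.getLast?_cons_cons, ← altL_succ]
    rw [show (2*k+1)+1 = 2*k+2 by ring]
    exact ih

lemma getLast?_altL_even (a b : V) (t : ℕ) (ht : 1 ≤ t) :
    (altL a b (2*t)).getLast? = some b := by
  obtain ⟨k, rfl⟩ : ∃ k, t = k + 1 := ⟨t - 1, by omega⟩
  rw [show 2*(k+1) = 2*k+2 by ring]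
  exact getLast?_altL_two_mul_add_two a b k

lemma head?_altL_pos (a b : V) (n : ℕ) (hn : 1 ≤ n) : (altL a b n).head? = some a := by
  cases n with
  | zero => omega
  | succ m => rfl


lemma count_altL {a b : V} (hab : a ≠ b) (n : ℕ) :
    (altL a b n).count a = (n+1)/2 ∧ (altL a b n).count b = n/2 := by
  induction n generalizing a b with
  | zero => simp
  | succ m ih =>
    obtain ⟨h1, h2⟩ := ih hab.symm
    rw [altL_succ]
    constructor
    · simp only [List.count_cons, beq_self_eq_true, if_true, h2]; omega
    · simp only [List.count_cons, h1, beq_iff_eq]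
      rw [if_neg hab]; omega

lemma count_altL_notmem {a b c : V} (hc : c ≠ a) (hc' : c ≠ b) (n : ℕ) :
    (altL a b n).count c = 0 := by
  rw [List.count_eq_zero]
  intro hmem
  rcases mem_altL hmem with h | h <;> [exact hc h; exact hc' h]


/-- keep first occurrences, in order -/
def firsts : List V → List V
  | [] => []
  | c :: l => c :: (firsts l).filter (fun d => decide (d ≠ c))

@[simp] lemma firsts_nil : firsts ([] : List V) = [] := rfl
lemma firsts_cons (c : V) (l : List V) :
    firsts (c :: l) = c :: (firsts l).filter (fun d => decide (d ≠ c)) := rfl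

@[simp] lemma mem_firsts {c : V} {l : List V} : c ∈ firsts l ↔ c ∈ l := by
  induction l with
  | nil => simp
  | cons d l ih =>
    rw [firsts_cons]
    simp only [List.mem_cons, List.mem_filter, ih, decide_eq_true_eq]
    constructor
    · rintro (h | ⟨h, _⟩) <;> tauto
    · rintro (h | h)
      · tauto
      · by_cases hcd : c = d <;> tauto

lemma count_firsts (c : V) (l : List V) :
    (firsts l).count c = if c ∈ l then 1 else 0 := by
  induction l with
  | nil => simp
  | cons d l ih =>
    rw [firsts_cons, List.count_cons]
    by_cases hcd : c = d
    · subst hcd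
      simp only [beq_self_eq_true, if_true, List.mem_cons, true_or, if_true]
      have : (List.filter (fun d => decide (d ≠ c)) (firsts l)).count c = 0 := by
        rw [List.count_eq_zero]
        intro h
        simp at h
      omega
    · rw [List.count_filter (by simpa using hcd)]
      simp only [List.mem_cons, beq_iff_eq]
      rw [if_neg (Ne.symm hcd), ih]
      by_cases hcl : c ∈ l <;> simp [hcl, hcd]

lemma filter_swap (p q : V → Bool) (l : List V) :
    (l.filter p).filter q = (l.filter q).filter p := by
  rw [List.filter_filter, List.filter_filter]
  apply List.filter_congr
  intro a _
  exact Bool.and_comm _ _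

lemma firsts_filter (p : V → Bool) (l : List V) :
    firsts (l.filter p) = (firsts l).filter p := by
  induction l with
  | nil => simp
  | cons c l ih =>
    rw [List.filter_cons, firsts_cons]
    by_cases hc : p c
    · rw [if_pos hc, firsts_cons, ih, filter_swap]
      rw [List.filter_cons, if_pos hc]
    · rw [if_neg hc, ih, List.filter_cons, if_neg hc, filter_swap]
      symm
      apply List.filter_eq_self.mpr
      intro a ha
      have hap : p a = true := (List.mem_filter.mp ha).2
      have : a ≠ c := fun h => hc (h ▸ hap)
      simpa using this


lemma firsts_altL_aux : ∀ (n : ℕ) (a b : V), a ≠ b →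
    firsts (altL a b (n+1)) = if n = 0 then [a] else [a, b] := by
  intro n
  induction n with
  | zero =>
    intro a b hab
    simp [altL, firsts_cons, firsts_nil]
  | succ m ih =>
    intro a b hab
    rw [altL_succ, firsts_cons, ih b a hab.symm, if_neg (Nat.succ_ne_zero m)]
    by_cases hm : m = 0
    · subst hm
      simp [hab.symm]
    · rw [if_neg hm]
      simp [hab, hab.symm]

lemma firsts_of_forall_eq {a : V} {m : List V} (h : ∀ c ∈ m, c = a) (hm : m ≠ []) :
    firsts m = [a] := by
  induction m with
  | nil => simp at hm
  | cons c l ih =>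
    have hc : c = a := h c (by simp)
    rw [firsts_cons, hc]
    by_cases hl : l = []
    · subst hl; simp [firsts_nil]
    · rw [ih (fun d hd => h d (List.mem_cons_of_mem _ hd)) hl]
      simp

-- head of alternating word with strictly fewer a's
lemma head_of_count_lt {a b : V} (hab : a ≠ b) {v : List V}
    (hmem : ∀ c ∈ v, c = a ∨ c = b) (h0 : pattern11Count v = 0)
    (hlt : v.count a < v.count b) : v.head? = some b := by
  rcases struct hab v hmem h0 with h | h
  · exfalso
    have h1 := (count_altL hab v.length).1
    have h2 := (count_altL hab v.length).2
    rw [← h] at h1 h2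
    omega
  · have h2 := (count_altL hab.symm v.length).1
    rw [← h] at h2
    have hn : 1 ≤ v.length := by
      by_contra hn
      have : v.length = 0 := by omega
      rw [this, altL_zero] at h
      subst h
      simp at hlt
    rw [h, head?_altL_pos _ _ _ hn]

-- main step lemma
lemma step_rep (G : SimpleGraph V) (w : List V) (K : ℕ) (hw : IsK11Rep G 0 w)
    (hK : ∀ v, w.count v ≤ K) :
    IsK11Rep G 0 (firsts (w.filter (fun c => decide (w.count c < K))) ++ w) := by
  set inA : V → Bool := fun c => decide (w.count c < K) with hinA
  set P : List V := firsts (w.filter inA) with hP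
  constructor
  · intro v; exact List.mem_append_right _ (hw.1 v)
  intro a b hab
  set pair : V → Bool := fun c => decide (c = a ∨ c = b) with hpair
  set v : List V := w.filter pair with hv
  have hfil : (P ++ w).filter pair = P.filter pair ++ v := List.filter_append _ _
  have hPf : P.filter pair = firsts (w.filter (fun c => pair c && inA c)) := by
    rw [hP, ← firsts_filter, List.filter_filter]
  have hmemv : ∀ c ∈ v, c = a ∨ c = b := by
    intro c hc
    have := (List.mem_filter.mp hc).2
    simpa [hpair] using this
  have hav : a ∈ v := List.mem_filter.mpr ⟨hw.1 a, by simp [hpair]⟩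
  have hbv : b ∈ v := List.mem_filter.mpr ⟨hw.1 b, by simp [hpair]⟩
  have hcount_a : v.count a = w.count a := List.count_filter (by simp [hpair])
  have hcount_b : v.count b = w.count b := List.count_filter (by simp [hpair])
  rw [hfil]
  constructor
  · -- forward: Adj → pc = 0
    intro hadj
    have h0 : pattern11Count v = 0 := Nat.le_zero.mp ((hw.2 a b hab).mp hadj)
    rw [Nat.le_zero, pc_append]
    by_cases ha : w.count a < K <;> by_cases hb : w.count b < K
    · -- both in A : prefix = firsts v
      have hpre : w.filter (fun c => pair c && inA c) = v := by
        rw [hv]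
        apply List.filter_congr
        intro c _
        by_cases h1 : c = a
        · simp [hpair, hinA, h1, ha, hab, hab.symm]
        · by_cases h2 : c = b
          · simp [hpair, hinA, h1, h2, hb, hab, hab.symm]
          · simp [hpair, h1, h2]
      rw [hPf, hpre]
      -- v = altL a b n or altL b a n with n ≥ 2
      have hca : 1 ≤ v.count a := List.count_pos_iff.mpr hav
      have hcb : 1 ≤ v.count b := List.count_pos_iff.mpr hbv
      have hlen2 : 2 ≤ v.length := by
        rcases struct hab v hmemv h0 with h | h
        · have h1 := count_altL (a := a) (b := b) hab v.length
          rw [← h] at h1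
          omega
        · have h1 := count_altL (a := b) (b := a) hab.symm v.length
          rw [← h] at h1
          omega
      rcases struct hab v hmemv h0 with h | h
      · have hfv : firsts v = [a, b] := by
          obtain ⟨m, hm⟩ : ∃ m, v.length = m + 1 := ⟨v.length - 1, by omega⟩
          rw [h, hm, firsts_altL_aux m a b hab, if_neg (by omega)]
        rw [hfv]
        have hhead : v.head? = some a := by
          rw [h]; exact head?_altL_pos _ _ _ (by omega)
        have hlast : ([a, b] : List V).getLast? = some b := rfl
        rw [hlast, hhead, junc_def, if_neg hab.symm, h0, pc_cons_cons]
        simp [hab, pc_single]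
      · have hfv : firsts v = [b, a] := by
          obtain ⟨m, hm⟩ : ∃ m, v.length = m + 1 := ⟨v.length - 1, by omega⟩
          rw [h, hm, firsts_altL_aux m b a hab.symm, if_neg (by omega)]
        rw [hfv]
        have hhead : v.head? = some b := by
          rw [h]; exact head?_altL_pos _ _ _ (by omega)
        have hlast : ([b, a] : List V).getLast? = some a := rfl
        rw [hlast, hhead, junc_def, if_neg hab, h0, pc_cons_cons]
        simp [hab.symm, pc_single]
    · -- a in A, b not: prefix = [a], head v = b
      have hpre : w.filter (fun c => pair c && inA c) = w.filter (fun c => decide (c = a)) := by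
        apply List.filter_congr
        intro c _
        by_cases h1 : c = a
        · simp [hpair, hinA, h1, ha, hab, hab.symm]
        · by_cases h2 : c = b
          · simp [hpair, hinA, h1, h2, hb, hab, hab.symm]
          · simp [hpair, h1, h2]
      have hne : w.filter (fun c => decide (c = a)) ≠ [] := by
        intro h
        have : a ∈ w.filter (fun c => decide (c = a)) := List.mem_filter.mpr ⟨hw.1 a, by simp⟩
        rw [h] at this; simp at this
      rw [hPf, hpre, firsts_of_forall_eq (fun c hc => by simpa using (List.mem_filter.mp hc).2) hne]
      have hhead : v.head? = some b := by
        apply head_of_count_lt hab hmemv h0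
        rw [hcount_a, hcount_b]
        have := hK b
        omega
      have : ([a] : List V).getLast? = some a := rfl
      rw [this, hhead, junc_def, if_neg hab, h0, pc_single]
    · -- b in A, a not: prefix = [b], head v = a
      have hpre : w.filter (fun c => pair c && inA c) = w.filter (fun c => decide (c = b)) := by
        apply List.filter_congr
        intro c _
        by_cases h1 : c = a
        · simp [hpair, hinA, h1, ha, hab, hab.symm]
        · by_cases h2 : c = b
          · simp [hpair, hinA, h1, h2, hb, hab, hab.symm]
          · simp [hpair, h1, h2]
      have hne : w.filter (fun c => decide (c = b)) ≠ [] := by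
        intro h
        have : b ∈ w.filter (fun c => decide (c = b)) := List.mem_filter.mpr ⟨hw.1 b, by simp⟩
        rw [h] at this; simp at this
      rw [hPf, hpre, firsts_of_forall_eq (fun c hc => by simpa using (List.mem_filter.mp hc).2) hne]
      have hhead : v.head? = some a := by
        apply head_of_count_lt hab.symm (fun c hc => (hmemv c hc).symm) h0
        rw [hcount_a, hcount_b]
        have := hK a
        omega
      have : ([b] : List V).getLast? = some b := rfl
      rw [this, hhead, junc_def, if_neg hab.symm, h0, pc_single]
    · -- neither in A : prefix empty
      have hpre : w.filter (fun c => pair c && inA c) = [] := by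
        rw [List.filter_eq_nil_iff]
        intro c _
        by_cases h1 : c = a
        · simp [hpair, hinA, h1, ha, hab, hab.symm]
        · by_cases h2 : c = b
          · simp [hpair, hinA, h1, h2, hb, hab, hab.symm]
          · simp [hpair, h1, h2]
      rw [hPf, hpre, firsts_nil, h0, pc_nil]
      simp [junc_none_left]
  · -- backward
    intro hle
    apply (hw.2 a b hab).mpr
    show pattern11Count v ≤ 0
    have := pc_append_ge_right (P.filter pair) v
    omega

lemma step_count (w : List V) (K : ℕ) (hmem : ∀ v : V, v ∈ w) (c : V) :
    (firsts (w.filter (fun c => decide (w.count c < K))) ++ w).count c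
      = w.count c + (if w.count c < K then 1 else 0) := by
  rw [List.count_append, count_firsts]
  by_cases h : w.count c < K
  · rw [if_pos h, if_pos (List.mem_filter.mpr ⟨hmem c, by simp [h]⟩)]
    omega
  · rw [if_neg h, if_neg (fun hc => h (by simpa using (List.mem_filter.mp hc).2))]
    omega

lemma uniformize [Fintype V] {G : SimpleGraph V} {w : List V} (hw : IsK11Rep G 0 w) :
    ∃ (K : ℕ) (w' : List V), IsK11Rep G 0 w' ∧ ∀ v, w'.count v = K := by
  set K := Finset.univ.sup (fun v => w.count v) with hKdef
  have hbound : ∀ v : V, w.count v ≤ K := fun v => Finset.le_sup (f := fun v => w.count v) (Finset.mem_univ v)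
  refine ⟨K, ?_⟩
  suffices h : ∀ N (u : List V), IsK11Rep G 0 u → (∀ v, u.count v ≤ K) →
      (∑ v : V, (K - u.count v)) ≤ N → ∃ w', IsK11Rep G 0 w' ∧ ∀ v, w'.count v = K from
    h _ w hw hbound le_rfl
  intro N
  induction N with
  | zero =>
    intro u hu hub hsum
    refine ⟨u, hu, fun v => ?_⟩
    have h0 : K - u.count v = 0 := by
      by_contra h
      have h1 : 0 < K - u.count v := Nat.pos_of_ne_zero h
      have h2 : 0 < ∑ v : V, (K - u.count v) :=
        Finset.sum_pos' (fun i _ => Nat.zero_le _) ⟨v, Finset.mem_univ v, h1⟩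
      omega
    have := hub v
    omega
  | succ N ih =>
    intro u hu hub hsum
    by_cases hunif : ∀ v : V, u.count v = K
    · exact ⟨u, hu, hunif⟩
    · push_neg at hunif
      obtain ⟨v₀, hv₀⟩ := hunif
      have hlt : u.count v₀ < K := lt_of_le_of_ne (hub v₀) hv₀
      set u' := firsts (u.filter (fun c => decide (u.count c < K))) ++ u with hu'
      have hcnt : ∀ c, u'.count c = u.count c + (if u.count c < K then 1 else 0) :=
        step_count u K hu.1
      have hub' : ∀ v, u'.count v ≤ K := by
        intro v
        rw [hcnt]
        by_cases h : u.count v < K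
        · simp [h]
        · simp [h]; exact hub v
      have hdec : (∑ v : V, (K - u'.count v)) < ∑ v : V, (K - u.count v) := by
        apply Finset.sum_lt_sum
        · intro i _
          rw [hcnt]
          by_cases h : u.count i < K <;> simp [h] <;> omega
        · exact ⟨v₀, Finset.mem_univ _, by rw [hcnt, if_pos hlt]; omega⟩
      exact ih u' (step_rep G u K hu hub) hub' (by omega)

lemma uniform_shape {a b : V} (hab : a ≠ b) {v : List V} {t : ℕ}
    (hmem : ∀ c ∈ v, c = a ∨ c = b) (h0 : pattern11Count v = 0)
    (hca : v.count a = t) (hcb : v.count b = t) :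
    v = altL a b (2*t) ∨ v = altL b a (2*t) := by
  rcases struct hab v hmem h0 with h | h
  · left
    have h1 := count_altL hab v.length
    rw [← h] at h1
    have : v.length = 2*t := by omega
    rw [this] at h
    exact h
  · right
    have h1 := count_altL hab.symm v.length
    rw [← h] at h1
    have : v.length = 2*t := by omega
    rw [this] at h
    exact h

lemma head?_altL_append (a b : V) (n : ℕ) (hn : 1 ≤ n) (s : List V) :
    (altL a b n ++ s).head? = some a := by
  obtain ⟨m, rfl⟩ : ∃ m, n = m + 1 := ⟨n - 1, by omega⟩
  rw [altL_succ, List.cons_append]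
  rfl

lemma head?_altL' (a b : V) (n : ℕ) (hn : 1 ≤ n) : (altL a b n).head? = some a := by
  obtain ⟨m, rfl⟩ : ∃ m, n = m + 1 := ⟨n - 1, by omega⟩
  rw [altL_succ]
  rfl

lemma pc_altL_append {a b : V} (hab : a ≠ b) {t : ℕ} (ht : 1 ≤ t) (s : List V) :
    pattern11Count (altL a b (2*t) ++ s) = pattern11Count s + junc (some b) s.head? := by
  rw [pc_append, pc_altL hab, getLast?_altL_even a b t ht]
  omega

lemma pc_single_append (c : V) (s : List V) :
    pattern11Count ([c] ++ s) = pattern11Count s + junc (some c) s.head? := by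
  rw [pc_append, pc_single]
  simp only [List.getLast?_singleton]
  omega

lemma pc_ge_two {v : List V} (m1 m2 : List V) (hv : 1 ≤ pattern11Count v) :
    2 ≤ pattern11Count (v ++ (m1 ++ (v ++ (m2 ++ v)))) := by
  have h1 := pc_append_ge v (m1 ++ (v ++ (m2 ++ v)))
  have h2 := pc_append_ge_right m1 (v ++ (m2 ++ v))
  have h3 := pc_append_ge v (m2 ++ v)
  omega

section shapes
variable {a b : V} {t : ℕ}

lemma shape_none (hab : a ≠ b) (ht : 1 ≤ t) :
    pattern11Count (altL a b (2*t) ++ (altL a b (2*t) ++ altL a b (2*t))) = 0 := by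
  have ht2 : (1:ℕ) ≤ 2*t := by omega
  rw [pc_altL_append hab ht, pc_altL_append hab ht, pc_altL hab,
      head?_altL_append a b (2*t) ht2, head?_altL' a b (2*t) ht2]
  simp [junc_def, hab.symm]

lemma shape_x_first (hab : a ≠ b) (ht : 1 ≤ t) :
    pattern11Count (altL a b (2*t) ++ ([a] ++ (altL a b (2*t) ++ altL a b (2*t)))) = 1 := by
  have ht2 : (1:ℕ) ≤ 2*t := by omega
  rw [pc_altL_append hab ht, pc_single_append, pc_altL_append hab ht, pc_altL hab,
      head?_altL_append a b (2*t) ht2, head?_altL' a b (2*t) ht2]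
  simp [junc_def, hab.symm]

lemma shape_x_second (hab : a ≠ b) (ht : 1 ≤ t) :
    pattern11Count (altL a b (2*t) ++ ([b] ++ (altL a b (2*t) ++ altL a b (2*t)))) = 1 := by
  have ht2 : (1:ℕ) ≤ 2*t := by omega
  rw [pc_altL_append hab ht, pc_single_append, pc_altL_append hab ht, pc_altL hab,
      head?_altL_append a b (2*t) ht2, head?_altL' a b (2*t) ht2]
  simp [junc_def, hab, hab.symm]

lemma shape_y_first (hab : a ≠ b) (ht : 1 ≤ t) :
    pattern11Count (altL a b (2*t) ++ (altL a b (2*t) ++ ([a] ++ altL a b (2*t)))) = 1 := by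
  have ht2 : (1:ℕ) ≤ 2*t := by omega
  rw [pc_altL_append hab ht (s := altL a b (2*t) ++ ([a] ++ altL a b (2*t))),
      pc_altL_append hab ht, pc_single_append, pc_altL hab,
      head?_altL_append a b (2*t) ht2, head?_altL' a b (2*t) ht2]
  simp [junc_def, hab.symm]

lemma shape_y_second (hab : a ≠ b) (ht : 1 ≤ t) :
    pattern11Count (altL a b (2*t) ++ (altL a b (2*t) ++ ([b] ++ altL a b (2*t)))) = 1 := by
  have ht2 : (1:ℕ) ≤ 2*t := by omega
  rw [pc_altL_append hab ht (s := altL a b (2*t) ++ ([b] ++ altL a b (2*t))),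
      pc_altL_append hab ht, pc_single_append, pc_altL hab,
      head?_altL_append a b (2*t) ht2, head?_altL' a b (2*t) ht2]
  simp [junc_def, hab, hab.symm]

lemma shape_xy_first (hab : a ≠ b) (ht : 1 ≤ t) :
    pattern11Count (altL a b (2*t) ++ ([a] ++ (altL a b (2*t) ++ ([b] ++ altL a b (2*t))))) = 2 := by
  have ht2 : (1:ℕ) ≤ 2*t := by omega
  rw [pc_altL_append hab ht, pc_single_append, pc_altL_append hab ht, pc_single_append,
      pc_altL hab, head?_altL_append a b (2*t) ht2, head?_altL' a b (2*t) ht2]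
  simp [junc_def, hab, hab.symm]

lemma shape_xy_second (hab : a ≠ b) (ht : 1 ≤ t) :
    pattern11Count (altL a b (2*t) ++ ([b] ++ (altL a b (2*t) ++ ([a] ++ altL a b (2*t))))) = 2 := by
  have ht2 : (1:ℕ) ≤ 2*t := by omega
  rw [pc_altL_append hab ht, pc_single_append, pc_altL_append hab ht, pc_single_append,
      pc_altL hab, head?_altL_append a b (2*t) ht2, head?_altL' a b (2*t) ht2]
  simp [junc_def, hab, hab.symm]

end shapes

end K11Aux

/-- if `G` is word-representable and `xy` is an edge of `G`, then the
graph obtained from `G` by deleting the edge `xy` is 1-11-representable. -/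
theorem k11Representable_deleteEdge {V : Type*} [DecidableEq V] [Fintype V]
    (G : SimpleGraph V) (x y : V) (hxy : G.Adj x y)
    (h : K11Representable G 0) :
    K11Representable (G.deleteEdges {s(x, y)}) 1 := by
  classical
  obtain ⟨w₀, hw₀⟩ := h
  obtain ⟨K, w, hw, huni⟩ := K11Aux.uniformize hw₀
  have hxyne : x ≠ y := hxy.ne
  refine ⟨w ++ ([x] ++ (w ++ ([y] ++ w))), fun v => List.mem_append_left _ (hw.1 v), ?_⟩
  intro a b hab
  have hKpos : 1 ≤ K := by
    have h1 : 0 < w.count a := List.count_pos_iff.mpr (hw.1 a)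
    have := huni a
    omega
  have hfu : List.filter (fun c => decide (c = a ∨ c = b)) (w ++ ([x] ++ (w ++ ([y] ++ w))))
      = (w.filter (fun c => decide (c = a ∨ c = b)))
        ++ (List.filter (fun c => decide (c = a ∨ c = b)) [x]
        ++ ((w.filter (fun c => decide (c = a ∨ c = b)))
        ++ (List.filter (fun c => decide (c = a ∨ c = b)) [y]
        ++ (w.filter (fun c => decide (c = a ∨ c = b)))))) := by
    simp only [List.filter_append]
  have hadj_iff : (G.deleteEdges {s(x,y)}).Adj a b ↔ (G.Adj a b ∧ ¬ (s(a,b) = s(x,y))) := by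
    rw [SimpleGraph.deleteEdges_adj]
    rfl
  rw [hadj_iff, hfu]
  by_cases hGab : G.Adj a b
  case neg =>
    have h1 : 1 ≤ pattern11Count (w.filter (fun c => decide (c = a ∨ c = b))) := by
      by_contra hc
      exact hGab ((hw.2 a b hab).mpr (by omega))
    have h2 := K11Aux.pc_ge_two (List.filter (fun c => decide (c = a ∨ c = b)) [x])
      (List.filter (fun c => decide (c = a ∨ c = b)) [y]) h1
    simp only [hGab, false_and, false_iff]
    omega
  case pos =>
    have h0 : pattern11Count (w.filter (fun c => decide (c = a ∨ c = b))) = 0 :=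
      Nat.le_zero.mp ((hw.2 a b hab).mp hGab)
    have hmemv : ∀ c ∈ w.filter (fun c => decide (c = a ∨ c = b)), c = a ∨ c = b := by
      intro c hc
      simpa using (List.mem_filter.mp hc).2
    have hca : (w.filter (fun c => decide (c = a ∨ c = b))).count a = K := by
      rw [List.count_filter (by simp)]; exact huni a
    have hcb : (w.filter (fun c => decide (c = a ∨ c = b))).count b = K := by
      rw [List.count_filter (by simp)]; exact huni b
    have hst := K11Aux.uniform_shape hab hmemv h0 hca hcb
    by_cases hax : a = x
    · subst hax
      by_cases hby : b = y
      · subst hby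
        -- the deleted edge itself: count is 2
        rw [show List.filter (fun c => decide (c = a ∨ c = b)) [a] = [a] from by simp,
            show List.filter (fun c => decide (c = a ∨ c = b)) [b] = [b] from by simp]
        rcases hst with hsh | hsh <;> rw [hsh]
        · rw [K11Aux.shape_xy_first hab hKpos]
          simp [hGab]
        · rw [K11Aux.shape_xy_second hab.symm hKpos]
          simp [hGab]
      · -- a = x, b ∉ {x,y}
        have hbx : b ≠ a := hab.symm
        rw [show List.filter (fun c => decide (c = a ∨ c = b)) [a] = [a] from by simp,
            show List.filter (fun c => decide (c = a ∨ c = b)) [y] = [] from by simp [Ne.symm hxyne, Ne.symm hby]]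
        have hs : ¬ (s(a, b) = s(a, y)) := by
          rw [Sym2.eq_iff]
          rintro (⟨-, h1⟩ | ⟨h1, -⟩)
          · exact hby h1
          · exact hxyne h1
        simp only [List.nil_append]
        rcases hst with hsh | hsh <;> rw [hsh]
        · rw [K11Aux.shape_x_first hab hKpos]
          simp [hGab, hs]
        · rw [K11Aux.shape_x_second hab.symm hKpos]
          simp [hGab, hs]
    · by_cases hbx : b = x
      · subst hbx
        by_cases hay : a = y
        · subst hay
          -- reversed edge pair
          rw [show List.filter (fun c => decide (c = a ∨ c = b)) [b] = [b] from by simp,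
              show List.filter (fun c => decide (c = a ∨ c = b)) [a] = [a] from by simp]
          have hs : s(a, b) = s(b, a) := Sym2.eq_swap
          rcases hst with hsh | hsh <;> rw [hsh]
          · rw [K11Aux.shape_xy_second hab hKpos]
            simp [hGab, hs]
          · rw [K11Aux.shape_xy_first hab.symm hKpos]
            simp [hGab, hs]
        · -- b = x, a ∉ {x,y}
          rw [show List.filter (fun c => decide (c = a ∨ c = b)) [b] = [b] from by simp,
              show List.filter (fun c => decide (c = a ∨ c = b)) [y] = [] from by simp [Ne.symm hay, Ne.symm hxyne]]
          have hs : ¬ (s(a, b) = s(b, y)) := by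
            rw [Sym2.eq_iff]
            rintro (⟨h1, -⟩ | ⟨h1, -⟩)
            · exact hax h1
            · exact hay h1
          simp only [List.nil_append]
          rcases hst with hsh | hsh <;> rw [hsh]
          · rw [K11Aux.shape_x_second hab hKpos]
            simp [hGab, hs]
          · rw [K11Aux.shape_x_first hab.symm hKpos]
            simp [hGab, hs]
      · by_cases hay : a = y
        · subst hay
          -- a = y, b ∉ {x,y}
          have hby : b ≠ a := hab.symm
          rw [show List.filter (fun c => decide (c = a ∨ c = b)) [x] = [] from by simp [hxyne, Ne.symm hbx],
              show List.filter (fun c => decide (c = a ∨ c = b)) [a] = [a] from by simp]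
          have hs : ¬ (s(a, b) = s(x, a)) := by
            rw [Sym2.eq_iff]
            rintro (⟨h1, -⟩ | ⟨-, h1⟩)
            · exact hxyne h1.symm
            · exact hbx h1
          simp only [List.nil_append]
          rcases hst with hsh | hsh <;> rw [hsh]
          · rw [K11Aux.shape_y_first hab hKpos]
            simp [hGab, hs]
          · rw [K11Aux.shape_y_second hab.symm hKpos]
            simp [hGab, hs]
        · by_cases hby : b = y
          · subst hby
            -- b = y, a ∉ {x,y}
            rw [show List.filter (fun c => decide (c = a ∨ c = b)) [x] = [] from by simp [Ne.symm hax, hxyne],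
                show List.filter (fun c => decide (c = a ∨ c = b)) [b] = [b] from by simp]
            have hs : ¬ (s(a, b) = s(x, b)) := by
              rw [Sym2.eq_iff]
              rintro (⟨h1, -⟩ | ⟨h1, -⟩)
              · exact hax h1
              · exact hay h1
            simp only [List.nil_append]
            rcases hst with hsh | hsh <;> rw [hsh]
            · rw [K11Aux.shape_y_second hab hKpos]
              simp [hGab, hs]
            · rw [K11Aux.shape_y_first hab.symm hKpos]
              simp [hGab, hs]
          · -- neither a nor b in {x, y}
            rw [show List.filter (fun c => decide (c = a ∨ c = b)) [x] = [] from by simp [Ne.symm hax, Ne.symm hbx],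
                show List.filter (fun c => decide (c = a ∨ c = b)) [y] = [] from by simp [Ne.symm hay, Ne.symm hby]]
            have hs : ¬ (s(a, b) = s(x, y)) := by
              rw [Sym2.eq_iff]
              rintro (⟨h1, -⟩ | ⟨h1, -⟩)
              · exact hax h1
              · exact hay h1
            simp only [List.nil_append]
            rcases hst with hsh | hsh <;> rw [hsh]
            · rw [K11Aux.shape_none hab hKpos]
              simp [hGab, hs]
            · rw [K11Aux.shape_none hab.symm hKpos]
              simp [hGab, hs]
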